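/- arXiv:0810.2568 — 3 statements merged into one kernel-verified Lean document; each statement's English description precedes it below -/
import Mathlib

section
/- Let M ⊆ ℂ² be the Lewy hypersurface {Im w = |z|²}, with complexification 𝓜 = {(z,w,χ,τ) ∈ ℂ⁴ : w - τ = 2 i z χ}. For any α, α̃ ∈ ℂ \ {0} and β, β̃, γ ∈ ℂ, the map 𝓗(z,w,χ,τ) = ( α(z+βw)/(1-(γ+iββ̃)w - 2iβ̃z), αα̃w/(1-(γ+iββ̃)w - 2iβ̃z), α̃(χ+β̃τ)/(1-(γ-iββ̃)τ + 2iβχ), αα̃τ/(1-(γ-iββ̃)τ + 2iβχ) ) maps 𝓜 into 𝓜 near the origin, i.e., whenever w - τ = 2izχ and the denominators are nonzero, the images (z',w',χ',τ') satisfy w' - τ' = 2iz'χ'. -/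
open Complex

theorem stmt_2 (α β γ atil btil : ℂ) (hα : α ≠ 0) (hatil : atil ≠ 0)
    (z w χ τ : ℂ) (hM : w - τ = 2 * I * z * χ)
    (hD₁ : 1 - (γ + I * β * btil) * w - 2 * I * btil * z ≠ 0)
    (hD₂ : 1 - (γ - I * β * btil) * τ + 2 * I * β * χ ≠ 0) :
    α * atil * w / (1 - (γ + I * β * btil) * w - 2 * I * btil * z) -
      α * atil * τ / (1 - (γ - I * β * btil) * τ + 2 * I * β * χ) =
    2 * I * (α * (z + β * w) / (1 - (γ + I * β * btil) * w - 2 * I * btil * z)) *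
      (atil * (χ + btil * τ) / (1 - (γ - I * β * btil) * τ + 2 * I * β * χ)) := by
  rw [div_sub_div _ _ hD₁ hD₂, show ∀ a b c d : ℂ, 2 * I * (a / b) * (c / d) = 2 * I * (a * c) / (b * d) from fun a b c d => by ring, div_eq_div_iff (mul_ne_zero hD₁ hD₂) (mul_ne_zero hD₁ hD₂)]
  have h : w = τ + 2 * I * z * χ := by linear_combination hM
  subst h
  ring_nf
end

section
/- Conversely, if a diagonal-type map 𝓗(z,w,χ,τ) = (az, bw, ãχ, b̃τ) with a, b, ã, b̃ ∈ ℂ \ {0} maps 𝓜 = {w - τ = 2ic₁(zχ)ᵐ + 2ic₂(zχ)ⁿ} into itself (c₁,c₂ ≠ 0, 1 < m < n), then b = b̃ = (aã)ᵐ and (aã)^{n-m} = 1. -/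
open Complex

theorem stmt_5 (c₁ c₂ : ℂ) (hc₁ : c₁ ≠ 0) (hc₂ : c₂ ≠ 0) (m n : ℕ)
    (hm : 1 < m) (hmn : m < n) (a b atil btil : ℂ)
    (ha : a ≠ 0) (hb : b ≠ 0) (hatil : atil ≠ 0) (hbtil : btil ≠ 0)
    (hmap : ∀ z w χ τ : ℂ,
      w - τ = 2 * I * c₁ * (z * χ) ^ m + 2 * I * c₂ * (z * χ) ^ n →
      b * w - btil * τ =
        2 * I * c₁ * ((a * atil) * (z * χ)) ^ m +
          2 * I * c₂ * ((a * atil) * (z * χ)) ^ n) :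
    b = (a * atil) ^ m ∧ btil = (a * atil) ^ m ∧ (a * atil) ^ (n - m) = 1 := by
  set A := a * atil with hA
  have hAne : A ≠ 0 := mul_ne_zero ha hatil
  have hm0 : m ≠ 0 := by omega
  have hn0 : n ≠ 0 := by omega
  -- b = btil
  have hbb : b = btil := by
    have h := hmap 0 1 0 1 (by simp [zero_pow hm0, zero_pow hn0])
    simp [zero_pow hm0, zero_pow hn0] at h
    linear_combination h
  -- main functional equation
  have key : ∀ s : ℂ, b * (2 * I * c₁ * s ^ m + 2 * I * c₂ * s ^ n)
      = 2 * I * c₁ * (A * s) ^ m + 2 * I * c₂ * (A * s) ^ n := by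
    intro s
    have h := hmap s (2 * I * c₁ * s ^ m + 2 * I * c₂ * s ^ n) 1 0 (by ring)
    simp only [mul_one] at h
    linear_combination h
  have eq1 := key 1
  have eq2 := key 2
  simp only [mul_pow, mul_one, one_pow] at eq1 eq2
  -- α s^m = β s^n shape: derive α = 0 using s = 1, 2
  have h2 : (2:ℂ) ^ m ≠ (2:ℂ) ^ n := by
    intro h
    have hr : (2:ℝ) ^ m = (2:ℝ) ^ n := by exact_mod_cast h
    have hlt : (2:ℝ) ^ m < (2:ℝ) ^ n := pow_lt_pow_right₀ (by norm_num) hmn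
    linarith
  have halpha : 2 * I * c₁ * (b - A ^ m) = 0 := by
    have hbeta : 2 * I * c₁ * (b - A ^ m) = 2 * I * c₂ * (A ^ n - b) := by
      linear_combination eq1
    have h22 : 2 * I * c₁ * (b - A ^ m) * (2:ℂ) ^ m
        = 2 * I * c₂ * (A ^ n - b) * (2:ℂ) ^ n := by
      linear_combination eq2
    have : 2 * I * c₁ * (b - A ^ m) * ((2:ℂ) ^ m - (2:ℂ) ^ n) = 0 := by
      linear_combination h22 - (2:ℂ)^n * hbeta
    rcases mul_eq_zero.1 this with h | h
    · exact h
    · exact absurd (sub_eq_zero.1 h) h2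
  have hbA : b = A ^ m := by
    have h2I : (2:ℂ) * I * c₁ ≠ 0 := by
      simp [I_ne_zero, hc₁]
    have := mul_eq_zero.1 halpha
    rcases this with h | h
    · exact absurd h h2I
    · exact sub_eq_zero.1 h
  have hbeta0 : A ^ n = b := by
    have hbeta : 2 * I * c₂ * (A ^ n - b) = 0 := by
      linear_combination halpha - eq1
    have h2I : (2:ℂ) * I * c₂ ≠ 0 := by simp [I_ne_zero, hc₂]
    rcases mul_eq_zero.1 hbeta with h | h
    · exact absurd h h2I
    · exact sub_eq_zero.1 h
  refine ⟨hbA, hbb ▸ hbA, ?_⟩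
  have hpow : A ^ (n - m) * A ^ m = A ^ m := by
    rw [← pow_add]
    rw [Nat.sub_add_cancel hmn.le, hbeta0, hbA]
  have := mul_right_cancel₀ (pow_ne_zero m hAne) (by rw [hpow, one_mul] : A ^ (n - m) * A ^ m = 1 * A ^ m)
  exact this
end

section
/- Segre mapping vanishing identity for the Lewy hypersurface: For M = {Im w = |z|²} in ℂ² (so Q(z, χ, τ) = τ + 2izχ), the Segre mappings v^r defined by v¹(t⁰) = (t⁰, 0) and v^r(t⁰,…,t^{r−1}) = (t⁰, Q(t⁰, t¹, conj-part u^{r−1}(t¹,…,t^{r−1}))) satisfy v²(0, x¹) = 0 and more generally v^{2r}(0, x¹, …, x^{r−1}, x^r, x^{r−1}, …, x¹) = 0 for all x near 0. -/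
open Complex

/-- The maps `u^r` for the Lewy hypersurface `Im w = |z|²`, with
`Q(z,χ,τ) = τ + 2izχ`: `u¹(t⁰) = 0` and
`u^{r+1}(t⁰,…,t^r) = Q(t⁰, t¹, ū^r(t¹,…,t^r))`, where `ū(t) = conj(u(conj t))`. -/
noncomputable def uSeg : (r : ℕ) → (Fin (r + 1) → ℂ) → ℂ
  | 0, _ => 0
  | r + 1, t =>
      (starRingEnd ℂ) (uSeg r fun j => (starRingEnd ℂ) (t j.succ)) +
        2 * I * t 0 * t 1

/-- The Segre mappings `v^r(t) = (t⁰, u^r(t))` for the Lewy hypersurface. -/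
noncomputable def vSeg (r : ℕ) (t : Fin (r + 1) → ℂ) : ℂ × ℂ :=
  (t 0, uSeg r t)

lemma uSeg_closed (r : ℕ) (t : ℕ → ℂ) :
    uSeg r (fun j => t j) = 2 * I * ∑ k ∈ Finset.range r, (-1)^k * t k * t (k+1) := by
  induction r generalizing t with
  | zero => simp [uSeg]
  | succ r ih =>
      have h1 : (fun j : Fin (r+1) => (starRingEnd ℂ) ((fun j : Fin (r+2) => t j) j.succ))
          = (fun j : Fin (r+1) => (fun n => (starRingEnd ℂ) (t (n+1))) (j : ℕ)) := by
        ext j; simp [Fin.val_succ]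
      rw [uSeg, h1, ih fun n => (starRingEnd ℂ) (t (n+1))]
      have h0 : ((0 : Fin (r+2)) : ℕ) = 0 := rfl
      have h2 : ((1 : Fin (r+2)) : ℕ) = 1 := rfl
      rw [h0, h2, Finset.sum_range_succ']
      simp only [map_mul, map_sum, map_ofNat, Complex.conj_I, map_pow, map_neg, map_one,
        Complex.conj_conj, pow_succ, pow_zero]
      have hs : ∑ x ∈ Finset.range r, (-1:ℂ)^x * -1 * t (x+1) * t (x+1+1)
          = -∑ x ∈ Finset.range r, (-1:ℂ)^x * t (x+1) * t (x+1+1) := by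
        rw [← Finset.sum_neg_distrib]
        exact Finset.sum_congr rfl fun _ _ => by ring
      rw [hs]; ring

lemma sum_pal (N : ℕ) (hN : Odd N) (T : ℕ → ℂ) (h0 : T 0 = 0)
    (hpal : ∀ n, 1 ≤ n → n ≤ N → T (N + 1 - n) = T n) :
    ∑ k ∈ Finset.range N, (-1:ℂ)^k * T k * T (k+1) = 0 := by
  obtain ⟨m, hm⟩ := hN
  have hNpos : 0 < N := by omega
  rw [Finset.range_eq_Ico, Finset.sum_eq_sum_Ico_succ_bot hNpos]
  rw [pow_zero, h0, one_mul, zero_mul, zero_add]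
  refine Finset.sum_involution (fun k _ => N - k) ?_ ?_ ?_ ?_
  · intro k hk
    simp only [Finset.mem_Ico] at hk
    have hTk1 : T (N - k) = T (k + 1) := by
      have := hpal (k + 1) (by omega) (by omega)
      rw [show N + 1 - (k+1) = N - k by omega] at this
      exact this
    have hTk : T (N - k + 1) = T k := by
      have := hpal k (by omega) (by omega)
      rw [show N + 1 - k = N - k + 1 by omega] at this
      exact this
    have hpow : (-1:ℂ)^(N - k) = -(-1:ℂ)^k := by
      have h1 : (-1:ℂ)^(N - k) * (-1:ℂ)^k = (-1:ℂ)^N := by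
        rw [← pow_add]; congr 1; omega
      have h2 : (-1:ℂ)^N = -1 := Odd.neg_one_pow ⟨m, hm⟩
      have h3 : (-1:ℂ)^k * (-1:ℂ)^k = 1 := by
        rw [← pow_add, ← two_mul, pow_mul]; norm_num
      calc (-1:ℂ)^(N-k) = (-1:ℂ)^(N-k) * ((-1:ℂ)^k * (-1:ℂ)^k) := by rw [h3, mul_one]
        _ = ((-1:ℂ)^(N-k) * (-1:ℂ)^k) * (-1:ℂ)^k := by ring
        _ = -(-1:ℂ)^k := by rw [h1, h2]; ring
    rw [hTk1, hTk, hpow]; ring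
  · intro k hk _
    simp only [Finset.mem_Ico] at hk
    show N - k ≠ k
    omega
  · intro k hk
    simp only [Finset.mem_Ico] at hk ⊢
    omega
  · intro k hk
    simp only [Finset.mem_Ico] at hk
    show N - (N - k) = k
    omega

theorem stmt_13 (r : ℕ) (hr : 1 ≤ r) (x : Fin r → ℂ) :
    vSeg (2 * r - 1)
      (fun j : Fin (2 * r - 1 + 1) =>
        if h : (j : ℕ) = 0 then 0
        else if h2 : (j : ℕ) ≤ r then x ⟨(j : ℕ) - 1, by omega⟩
        else x ⟨2 * r - (j : ℕ) - 1, by have := j.isLt; omega⟩) = (0, 0) := by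
  have hT : ∀ n, ∀ h : 1 ≤ n ∧ n ≤ r, n - 1 < r := fun n h => by omega
  have hT2 : ∀ n, ∀ h : r < n ∧ n < 2 * r, 2 * r - n - 1 < r := fun n h => by omega
  set T : ℕ → ℂ := fun n =>
    if h : 1 ≤ n ∧ n ≤ r then x ⟨n - 1, hT n h⟩
    else if h2 : r < n ∧ n < 2 * r then x ⟨2 * r - n - 1, hT2 n h2⟩
    else 0 with hTdef
  have hfun : (fun j : Fin (2 * r - 1 + 1) =>
        if h : (j : ℕ) = 0 then 0
        else if h2 : (j : ℕ) ≤ r then x ⟨(j : ℕ) - 1, by omega⟩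
        else x ⟨2 * r - (j : ℕ) - 1, by have := j.isLt; omega⟩)
      = (fun j : Fin (2 * r - 1 + 1) => T (j : ℕ)) := by
    funext j
    have hj := j.isLt
    rw [hTdef]
    dsimp only
    split_ifs <;> first | rfl | (exact congrArg x (by simp only [Fin.mk.injEq]; omega)) | (exfalso; omega)
  rw [hfun]
  unfold vSeg
  rw [uSeg_closed]
  have h0 : T 0 = 0 := by rw [hTdef]; norm_num
  have hsum : ∑ k ∈ Finset.range (2 * r - 1), (-1:ℂ)^k * T k * T (k+1) = 0 := by
    refine sum_pal (2 * r - 1) ⟨r - 1, by omega⟩ T h0 ?_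
    intro n h1 h2
    rw [show 2 * r - 1 + 1 - n = 2 * r - n by omega, hTdef]
    dsimp only
    split_ifs <;> first | rfl | (exact congrArg x (by simp only [Fin.mk.injEq]; omega)) | (exfalso; omega)
  simp only [Prod.mk.injEq]
  exact ⟨h0, by rw [hsum, mul_zero]⟩
end
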